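/- A lattice triangle in ℝ² contains no lattice points other than its three vertices if and only if its area is 1/2. -/

import Mathlib

open MeasureTheory Set

/-- The lattice `ℤ² ⊂ ℝ²`. -/
def lat : Set (ℝ × ℝ) := {p | ∃ a b : ℤ, p = ((a : ℝ), (b : ℝ))}

noncomputable section LatAux

def stdT : Set (ℝ × ℝ) := {p | 0 ≤ p.1 ∧ 0 ≤ p.2 ∧ p.1 + p.2 ≤ 1}

lemma stdT_def (p : ℝ × ℝ) : p ∈ stdT ↔ 0 ≤ p.1 ∧ 0 ≤ p.2 ∧ p.1 + p.2 ≤ 1 := Iff.rfl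

lemma convexHull_std :
    convexHull ℝ ({((0:ℝ),(0:ℝ)), (1,0), (0,1)} : Set (ℝ × ℝ)) = stdT := by
  apply le_antisymm
  · apply convexHull_min
    · rintro p (rfl | rfl | rfl) <;> constructor <;> norm_num
    · have h1 : Convex ℝ {p : ℝ × ℝ | 0 ≤ p.1} :=
        convex_halfSpace_ge (LinearMap.fst ℝ ℝ ℝ).isLinear 0
      have h2 : Convex ℝ {p : ℝ × ℝ | 0 ≤ p.2} :=
        convex_halfSpace_ge (LinearMap.snd ℝ ℝ ℝ).isLinear 0
      have h3 : Convex ℝ {p : ℝ × ℝ | p.1 + p.2 ≤ 1} :=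
        convex_halfSpace_le ((LinearMap.fst ℝ ℝ ℝ) + (LinearMap.snd ℝ ℝ ℝ)).isLinear 1
      exact fun p hp q hq s t hs ht hst =>
        ⟨h1 hp.1 hq.1 hs ht hst, h2 hp.2.1 hq.2.1 hs ht hst, h3 hp.2.2 hq.2.2 hs ht hst⟩
  · rintro ⟨x, y⟩ ⟨hx, hy, hxy⟩
    have := (convex_convexHull ℝ ({((0:ℝ),(0:ℝ)), (1,0), (0,1)} : Set (ℝ × ℝ))).sum_mem
      (t := Finset.univ) (w := ![1 - x - y, x, y]) (z := ![(0,0), (1,0), (0,1)])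
      (by intro i _; fin_cases i <;> simp <;> linarith)
      (by simp [Fin.sum_univ_three]; ring)
      (by intro i _; fin_cases i <;> exact subset_convexHull ℝ _ (by simp))
    simpa [Fin.sum_univ_three, Prod.ext_iff] using this

lemma volume_stdT : volume stdT = 1/2 := by
  set So : Set (ℝ × ℝ) := {p | 0 < p.1 ∧ 0 < p.2 ∧ p.1 + p.2 < 1} with hSo
  have hreg : So = regionBetween (fun _ => (0:ℝ)) (fun x => 1 - x) (Ioo 0 1) := by
    ext ⟨x, y⟩
    simp only [hSo, regionBetween, mem_setOf_eq, mem_Ioo]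
    constructor
    · rintro ⟨h1, h2, h3⟩; exact ⟨⟨h1, by linarith⟩, h2, by linarith⟩
    · rintro ⟨⟨h1, h2⟩, h3, h4⟩; exact ⟨h1, h3, by linarith⟩
  have hInt0 : IntegrableOn (fun _ : ℝ => (0:ℝ)) (Ioo 0 1) volume :=
    integrableOn_const (by simp [Real.volume_Ioo])
  have hIntid : IntegrableOn (fun x : ℝ => x) (Ioo 0 1) volume :=
    (intervalIntegral.intervalIntegrable_id (μ := volume) (a := 0) (b := 1)).1.mono_set
      Ioo_subset_Ioc_self
  have hInt1 : IntegrableOn (fun x : ℝ => 1 - x) (Ioo 0 1) volume :=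
    (integrableOn_const (by simp [Real.volume_Ioo])).sub hIntid
  have hvolSo : volume So = 1/2 := by
    rw [hreg, Measure.volume_eq_prod,
      volume_regionBetween_eq_integral hInt0 hInt1 measurableSet_Ioo
        (fun x hx => by simp at hx ⊢; linarith [hx.2])]
    have hI : ∫ y in Ioo (0:ℝ) 1, (1 - y) = 1/2 := by
      rw [← MeasureTheory.integral_Ioc_eq_integral_Ioo,
        ← intervalIntegral.integral_of_le zero_le_one]
      rw [intervalIntegral.integral_sub intervalIntegrable_const
        intervalIntegral.intervalIntegrable_id, integral_id,
        intervalIntegral.integral_const]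
      norm_num
    simp only [Pi.sub_apply, sub_zero]
    rw [hI, ENNReal.ofReal_div_of_pos (by norm_num)]
    norm_num
  have hsub : So ⊆ stdT := by
    rintro ⟨x, y⟩ ⟨h1, h2, h3⟩; exact ⟨le_of_lt h1, le_of_lt h2, le_of_lt h3⟩
  have hdiff : volume (stdT \ So) = 0 := by
    have hL1 : volume ({p : ℝ × ℝ | p.1 = 0}) = 0 := by
      have : {p : ℝ × ℝ | p.1 = 0} = ({0} : Set ℝ) ×ˢ (univ : Set ℝ) := by
        ext ⟨x, y⟩; simp [eq_comm]
      rw [this, Measure.volume_eq_prod, Measure.prod_prod]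
      simp
    have hL2 : volume ({p : ℝ × ℝ | p.2 = 0}) = 0 := by
      have : {p : ℝ × ℝ | p.2 = 0} = (univ : Set ℝ) ×ˢ ({0} : Set ℝ) := by
        ext ⟨x, y⟩; simp [eq_comm]
      rw [this, Measure.volume_eq_prod, Measure.prod_prod]
      simp
    have hL3 : volume ({p : ℝ × ℝ | p.1 + p.2 = 1}) = 0 := by
      have hm : MeasurableSet {p : ℝ × ℝ | p.1 + p.2 = 1} :=
        measurableSet_eq_fun (by fun_prop) measurable_const
      rw [Measure.volume_eq_prod, Measure.prod_apply hm]
      have h2 : (fun x : ℝ => volume (Prod.mk x ⁻¹' {p : ℝ × ℝ | p.1 + p.2 = 1}))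
          = fun _ => 0 := by
        funext x
        have : Prod.mk x ⁻¹' {p : ℝ × ℝ | p.1 + p.2 = 1} = {1 - x} := by
          ext y; simp; constructor <;> intro h <;> linarith
        rw [this]; exact measure_singleton _
      calc ∫⁻ x, volume (Prod.mk x ⁻¹' {p : ℝ × ℝ | p.1 + p.2 = 1}) = ∫⁻ _ : ℝ, 0 := by
            rw [h2]
      _ = 0 := lintegral_zero
    have hss : stdT \ So ⊆ {p : ℝ × ℝ | p.1 = 0} ∪ {p : ℝ × ℝ | p.2 = 0}
        ∪ {p : ℝ × ℝ | p.1 + p.2 = 1} := by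
      rintro ⟨x, y⟩ ⟨⟨h1, h2, h3⟩, hn⟩
      simp only [hSo, mem_setOf_eq, not_and, not_lt] at hn
      by_contra hcon
      simp only [mem_union, mem_setOf_eq, not_or] at hcon
      obtain ⟨⟨hc1, hc2⟩, hc3⟩ := hcon
      have hx : 0 < x := lt_of_le_of_ne h1 (Ne.symm hc1)
      have hy : 0 < y := lt_of_le_of_ne h2 (Ne.symm hc2)
      have := hn hx hy
      exact hc3 (le_antisymm h3 this)
    refine le_antisymm ?_ zero_le
    calc volume (stdT \ So) ≤ _ := measure_mono hss
    _ ≤ volume ({p : ℝ × ℝ | p.1 = 0} ∪ {p : ℝ × ℝ | p.2 = 0})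
        + volume ({p : ℝ × ℝ | p.1 + p.2 = 1}) := measure_union_le _ _
    _ ≤ volume ({p : ℝ × ℝ | p.1 = 0}) + volume ({p : ℝ × ℝ | p.2 = 0})
        + volume ({p : ℝ × ℝ | p.1 + p.2 = 1}) :=
          add_le_add (measure_union_le _ _) le_rfl
    _ = 0 := by rw [hL1, hL2, hL3]; simp
  have : volume stdT ≤ volume So := by
    calc volume stdT ≤ volume (So ∪ (stdT \ So)) :=
          measure_mono (fun p hp => by
            by_cases h : p ∈ So
            · exact Or.inl h
            · exact Or.inr ⟨hp, h⟩)
    _ ≤ volume So + volume (stdT \ So) := measure_union_le _ _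
    _ = volume So := by rw [hdiff, add_zero]
  rw [← hvolSo]
  exact le_antisymm this (measure_mono hsub)


def triLin (u v : ℝ × ℝ) : (ℝ × ℝ) →ₗ[ℝ] (ℝ × ℝ) :=
  Matrix.toLin (Module.Basis.finTwoProd ℝ) (Module.Basis.finTwoProd ℝ) !![u.1, v.1; u.2, v.2]

lemma triLin_apply (u v : ℝ × ℝ) (q : ℝ × ℝ) :
    triLin u v q = (u.1 * q.1 + v.1 * q.2, u.2 * q.1 + v.2 * q.2) :=
  Matrix.toLin_finTwoProd_apply _ _ _ _ _

lemma triLin_det (u v : ℝ × ℝ) :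
    LinearMap.det (triLin u v) = u.1 * v.2 - v.1 * u.2 := by
  rw [triLin, LinearMap.det_toLin, Matrix.det_fin_two_of]

def triMap (a u v : ℝ × ℝ) : (ℝ × ℝ) →ᵃ[ℝ] (ℝ × ℝ) :=
  (triLin u v).toAffineMap + AffineMap.const ℝ (ℝ × ℝ) a

lemma triMap_apply (a u v : ℝ × ℝ) (q : ℝ × ℝ) :
    triMap a u v q = (u.1 * q.1 + v.1 * q.2 + a.1, u.2 * q.1 + v.2 * q.2 + a.2) := by
  simp [triMap, triLin_apply, Prod.ext_iff]

lemma hull_eq_image (a u v : ℝ × ℝ) :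
    convexHull ℝ ({a, a + u, a + v} : Set (ℝ × ℝ)) = triMap a u v '' stdT := by
  rw [← convexHull_std, AffineMap.image_convexHull]
  congr 1
  have h0 : triMap a u v (0, 0) = a := by
    rw [triMap_apply]; simp
  have h1 : triMap a u v (1, 0) = a + u := by
    rw [triMap_apply]; simp [Prod.ext_iff]; constructor <;> ring
  have h2 : triMap a u v (0, 1) = a + v := by
    rw [triMap_apply]; simp [Prod.ext_iff]; constructor <;> ring
  rw [Set.image_insert_eq, Set.image_insert_eq, Set.image_singleton, h0, h1, h2]

lemma volume_hull (a u v : ℝ × ℝ) :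
    volume (convexHull ℝ ({a, a + u, a + v} : Set (ℝ × ℝ)))
      = ENNReal.ofReal |u.1 * v.2 - v.1 * u.2| * (1/2) := by
  rw [hull_eq_image]
  have : triMap a u v '' stdT = (fun y => y + a) '' (triLin u v '' stdT) := by
    rw [Set.image_image]
    apply Set.image_congr
    intro q _
    simp [triMap, triLin_apply]
  rw [this]
  have h1 : volume ((fun y => y + a) '' (triLin u v '' stdT))
      = volume (triLin u v '' stdT) := by
    rw [Set.image_add_right]
    exact measure_preimage_add_right volume (-a) _
  rw [h1, Measure.addHaar_image_linearMap, triLin_det, volume_stdT]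

lemma mem_hull_iff (a u v p : ℝ × ℝ) :
    p ∈ convexHull ℝ ({a, a + u, a + v} : Set (ℝ × ℝ))
      ↔ ∃ s t : ℝ, 0 ≤ s ∧ 0 ≤ t ∧ s + t ≤ 1 ∧
          p = (u.1 * s + v.1 * t + a.1, u.2 * s + v.2 * t + a.2) := by
  rw [hull_eq_image]
  constructor
  · rintro ⟨q, hq, rfl⟩
    obtain ⟨h1, h2, h3⟩ := (stdT_def q).1 hq
    exact ⟨q.1, q.2, h1, h2, h3, (triMap_apply a u v q)⟩
  · rintro ⟨s, t, h1, h2, h3, rfl⟩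
    exact ⟨(s, t), (stdT_def (s, t)).2 ⟨h1, h2, h3⟩, (triMap_apply a u v (s, t))⟩


lemma mem_hull_iff' (a b c p : ℝ × ℝ) :
    p ∈ convexHull ℝ ({a, b, c} : Set (ℝ × ℝ)) ↔
      ∃ s t : ℝ, 0 ≤ s ∧ 0 ≤ t ∧ s + t ≤ 1 ∧
        p = ((b.1 - a.1) * s + (c.1 - a.1) * t + a.1,
             (b.2 - a.2) * s + (c.2 - a.2) * t + a.2) := by
  have h : ({a, b, c} : Set (ℝ × ℝ)) = {a, a + (b - a), a + (c - a)} := by simp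
  rw [h, mem_hull_iff]
  rfl

lemma volume_hull' (a b c : ℝ × ℝ) :
    volume (convexHull ℝ ({a, b, c} : Set (ℝ × ℝ)))
      = ENNReal.ofReal |(b.1 - a.1) * (c.2 - a.2) - (c.1 - a.1) * (b.2 - a.2)| * (1/2) := by
  have h : ({a, b, c} : Set (ℝ × ℝ)) = {a, a + (b - a), a + (c - a)} := by simp
  rw [h, volume_hull]
  rfl

lemma tri_cramer {u1 u2 v1 v2 s t w1 w2 : ℝ} (hD : u1 * v2 - v1 * u2 ≠ 0)
    (h1 : u1 * s + v1 * t = w1) (h2 : u2 * s + v2 * t = w2) :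
    s = (w1 * v2 - v1 * w2) / (u1 * v2 - v1 * u2) ∧
    t = (u1 * w2 - w1 * u2) / (u1 * v2 - v1 * u2) := by
  rw [eq_div_iff hD, eq_div_iff hD]
  constructor
  · linear_combination v2 * h1 - v1 * h2
  · linear_combination u1 * h2 - u2 * h1

lemma collinear_det (a b c : ℝ × ℝ)
    (h : (b.1 - a.1) * (c.2 - a.2) - (c.1 - a.1) * (b.2 - a.2) = 0) :
    Collinear ℝ ({a, b, c} : Set (ℝ × ℝ)) := by
  rw [collinear_iff_of_mem (Set.mem_insert a {b, c})]
  by_cases hu : b - a = 0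
  · have hba : b = a := by rwa [sub_eq_zero] at hu
    refine ⟨c - a, ?_⟩
    rintro p (rfl | rfl | rfl)
    · exact ⟨0, by simp⟩
    · exact ⟨0, by simp [hba]⟩
    · exact ⟨1, by simp⟩
  · refine ⟨b - a, ?_⟩
    have key : ∃ r : ℝ, c - a = r • (b - a) := by
      by_cases hx : b.1 - a.1 ≠ 0
      · refine ⟨(c.1 - a.1) / (b.1 - a.1), ?_⟩
        have h1 : c.1 - a.1 = (c.1 - a.1) / (b.1 - a.1) * (b.1 - a.1) := by
          field_simp
        have h2 : c.2 - a.2 = (c.1 - a.1) / (b.1 - a.1) * (b.2 - a.2) := by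
          rw [div_mul_eq_mul_div, eq_div_iff hx]
          linear_combination h
        exact Prod.ext h1 h2
      · push_neg at hx
        have hy : b.2 - a.2 ≠ 0 := by
          intro hy
          apply hu
          have : b.1 = a.1 := by linarith
          have h2 : b.2 = a.2 := by linarith
          ext <;> simp [this, h2]
        refine ⟨(c.2 - a.2) / (b.2 - a.2), ?_⟩
        have h1 : c.1 - a.1 = (c.2 - a.2) / (b.2 - a.2) * (b.1 - a.1) := by
          have hca : c.1 - a.1 = 0 := by
            have := h
            rw [hx] at this
            simp at this
            rcases this with h' | h'
            · linarith
            · exact absurd h' hy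
          rw [hca, hx, mul_zero]
        have h2 : c.2 - a.2 = (c.2 - a.2) / (b.2 - a.2) * (b.2 - a.2) := by
          field_simp
        exact Prod.ext h1 h2
    obtain ⟨r, hr⟩ := key
    rintro p (rfl | rfl | rfl)
    · exact ⟨0, by simp⟩
    · exact ⟨1, by simp⟩
    · refine ⟨r, ?_⟩
      rw [← hr]
      simp

end LatAux

/-- A lattice triangle (convex hull of three non-collinear lattice points) contains
no lattice points other than its three vertices if and only if its area is `1/2`. -/
theorem lattice_triangle_empty_iff_area_half (a b c : ℝ × ℝ)
    (ha : a ∈ lat) (hb : b ∈ lat) (hc : c ∈ lat)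
    (hnc : ¬ Collinear ℝ ({a, b, c} : Set (ℝ × ℝ))) :
    convexHull ℝ ({a, b, c} : Set (ℝ × ℝ)) ∩ lat = {a, b, c}
      ↔ volume (convexHull ℝ ({a, b, c} : Set (ℝ × ℝ))) = 1 / 2 := by
  obtain ⟨A1, A2, rfl⟩ := ha
  obtain ⟨B1, B2, rfl⟩ := hb
  obtain ⟨C1, C2, rfl⟩ := hc
  set a : ℝ × ℝ := ((A1 : ℝ), (A2 : ℝ)) with ha_def
  set b : ℝ × ℝ := ((B1 : ℝ), (B2 : ℝ)) with hb_def
  set c : ℝ × ℝ := ((C1 : ℝ), (C2 : ℝ)) with hc_def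
  set u1 : ℝ := (B1 : ℝ) - A1 with hu1
  set u2 : ℝ := (B2 : ℝ) - A2 with hu2
  set v1 : ℝ := (C1 : ℝ) - A1 with hv1
  set v2 : ℝ := (C2 : ℝ) - A2 with hv2
  set Dz : ℤ := (B1 - A1) * (C2 - A2) - (C1 - A1) * (B2 - A2) with hDz
  have hDR : (Dz : ℝ) = u1 * v2 - v1 * u2 := by
    rw [hDz, hu1, hu2, hv1, hv2]; push_cast; ring
  have hDzne : Dz ≠ 0 := by
    intro h0
    apply hnc
    apply collinear_det
    show u1 * v2 - v1 * u2 = 0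
    rw [← hDR, h0, Int.cast_zero]
  have hDRne : u1 * v2 - v1 * u2 ≠ 0 := by
    rw [← hDR]
    exact_mod_cast hDzne
  -- the lattice membership helper
  have hlat : ∀ s t : ℝ, (∃ m : ℤ, u1 * s + v1 * t = m) → (∃ m : ℤ, u2 * s + v2 * t = m) →
      ((u1 * s + v1 * t + A1, u2 * s + v2 * t + A2) : ℝ × ℝ) ∈ lat := by
    rintro s t ⟨m, hm⟩ ⟨m', hm'⟩
    exact ⟨m + A1, m' + A2, by rw [Prod.ext_iff]; constructor <;> simp [hm, hm']⟩
  -- volume identity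
  have hiff : volume (convexHull ℝ ({a, b, c} : Set (ℝ × ℝ))) = 1 / 2 ↔
      (Dz = 1 ∨ Dz = -1) := by
    rw [volume_hull']
    have hco : (b.1 - a.1) * (c.2 - a.2) - (c.1 - a.1) * (b.2 - a.2) = u1 * v2 - v1 * u2 := rfl
    rw [hco, ← hDR]
    have h12 : (1/2 : ENNReal) = ENNReal.ofReal (1/2) := by
      rw [ENNReal.ofReal_div_of_pos (by norm_num)]
      norm_num
    rw [h12, ← ENNReal.ofReal_mul (abs_nonneg _),
      ENNReal.ofReal_eq_ofReal_iff (by positivity) (by norm_num)]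
    constructor
    · intro h
      have habs : |(Dz : ℝ)| = 1 := by linarith
      have : ((|Dz| : ℤ) : ℝ) = ((1 : ℤ) : ℝ) := by push_cast; rw [habs]
      have h2 : |Dz| = 1 := by exact_mod_cast this
      rcases abs_eq (by norm_num : (0:ℤ) ≤ 1) |>.1 h2 with h' | h'
      · exact Or.inl h'
      · exact Or.inr h'
    · intro h
      have habs : |(Dz : ℝ)| = 1 := by
        rcases h with h' | h' <;> rw [h'] <;> norm_num
      rw [habs]; ring
  rw [hiff]
  constructor
  · -- hull ∩ lat = vertices → det = ±1
    intro hEmpty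
    by_contra hno
    push_neg at hno
    obtain ⟨hn1, hn2⟩ := hno
    have hinv1 : u1 * (v2 / (u1 * v2 - v1 * u2)) + v1 * (-u2 / (u1 * v2 - v1 * u2)) = 1 := by
      rw [mul_div_assoc', mul_div_assoc', ← add_div, div_eq_one_iff_eq hDRne]
      ring
    have hinv2 : u2 * (v2 / (u1 * v2 - v1 * u2)) + v2 * (-u2 / (u1 * v2 - v1 * u2)) = 0 := by
      rw [mul_div_assoc', mul_div_assoc', ← add_div, div_eq_zero_iff]
      left; ring
    have hinv3 : u1 * (-v1 / (u1 * v2 - v1 * u2)) + v1 * (u1 / (u1 * v2 - v1 * u2)) = 0 := by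
      rw [mul_div_assoc', mul_div_assoc', ← add_div, div_eq_zero_iff]
      left; ring
    have hinv4 : u2 * (-v1 / (u1 * v2 - v1 * u2)) + v2 * (u1 / (u1 * v2 - v1 * u2)) = 1 := by
      rw [mul_div_assoc', mul_div_assoc', ← add_div, div_eq_one_iff_eq hDRne]
      ring
    have hnotall : ¬ ((∃ k : ℤ, v2 / (u1 * v2 - v1 * u2) = (k:ℝ)) ∧
        (∃ k : ℤ, -u2 / (u1 * v2 - v1 * u2) = (k:ℝ)) ∧
        (∃ k : ℤ, -v1 / (u1 * v2 - v1 * u2) = (k:ℝ)) ∧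
        (∃ k : ℤ, u1 / (u1 * v2 - v1 * u2) = (k:ℝ))) := by
      rintro ⟨⟨p1, hp1⟩, ⟨p2, hp2⟩, ⟨p3, hp3⟩, ⟨p4, hp4⟩⟩
      rw [div_eq_iff hDRne] at hp1 hp2 hp3 hp4
      have hkey : (u1 * v2 - v1 * u2) * (((p1:ℝ) * p4 - (p2:ℝ) * p3) * (u1 * v2 - v1 * u2))
          = (u1 * v2 - v1 * u2) * 1 := by
        calc (u1 * v2 - v1 * u2) * (((p1:ℝ) * p4 - (p2:ℝ) * p3) * (u1 * v2 - v1 * u2))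
            = (↑p4 * (u1 * v2 - v1 * u2)) * (↑p1 * (u1 * v2 - v1 * u2))
              - (↑p3 * (u1 * v2 - v1 * u2)) * (↑p2 * (u1 * v2 - v1 * u2)) := by ring
        _ = u1 * v2 - (-v1) * (-u2) := by rw [← hp1, ← hp2, ← hp3, ← hp4]
        _ = (u1 * v2 - v1 * u2) * 1 := by ring
      have hone : ((p1:ℝ) * p4 - (p2:ℝ) * p3) * (u1 * v2 - v1 * u2) = 1 :=
        mul_left_cancel₀ hDRne hkey
      have hmul : (Dz : ℝ) * ((p1 * p4 - p2 * p3 : ℤ) : ℝ) = 1 := by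
        push_cast
        rw [hDR]
        linear_combination hone
      have hz : Dz * (p1 * p4 - p2 * p3) = 1 := by exact_mod_cast hmul
      rcases Int.mul_eq_one_iff_eq_one_or_neg_one.1 hz with ⟨h', _⟩ | ⟨h', _⟩
      · exact hn1 h'
      · exact hn2 h'
    have hgood : ∃ (α β : ℝ) (E1 E2 : ℤ), u1 * α + v1 * β = (E1 : ℝ) ∧
        u2 * α + v2 * β = (E2 : ℝ) ∧
        ((¬ ∃ k : ℤ, α = (k:ℝ)) ∨ (¬ ∃ k : ℤ, β = (k:ℝ))) := by
      by_cases hA : ∃ k : ℤ, v2 / (u1 * v2 - v1 * u2) = (k:ℝ)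
      · by_cases hB : ∃ k : ℤ, -u2 / (u1 * v2 - v1 * u2) = (k:ℝ)
        · refine ⟨-v1 / (u1 * v2 - v1 * u2), u1 / (u1 * v2 - v1 * u2), 0, 1,
            by push_cast; exact hinv3, by push_cast; exact hinv4, ?_⟩
          by_cases hC : ∃ k : ℤ, -v1 / (u1 * v2 - v1 * u2) = (k:ℝ)
          · exact Or.inr (fun hDd => hnotall ⟨hA, hB, hC, hDd⟩)
          · exact Or.inl hC
        · exact ⟨v2 / (u1 * v2 - v1 * u2), -u2 / (u1 * v2 - v1 * u2), 1, 0,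
            by push_cast; exact hinv1, by push_cast; exact hinv2, Or.inr hB⟩
      · exact ⟨v2 / (u1 * v2 - v1 * u2), -u2 / (u1 * v2 - v1 * u2), 1, 0,
          by push_cast; exact hinv1, by push_cast; exact hinv2, Or.inl hA⟩
    obtain ⟨α, β, E1, E2, heq1, heq2, hni⟩ := hgood
    set s0 := Int.fract α with hs0def
    set t0 := Int.fract β with ht0def
    have hs0n : 0 ≤ s0 := Int.fract_nonneg α
    have ht0n : 0 ≤ t0 := Int.fract_nonneg β
    have hs01 : s0 < 1 := Int.fract_lt_one α
    have ht01 : t0 < 1 := Int.fract_lt_one β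
    have hfr : s0 = α - ⌊α⌋ := (Int.self_sub_floor α).symm
    have hfr' : t0 = β - ⌊β⌋ := (Int.self_sub_floor β).symm
    have hne : s0 ≠ 0 ∨ t0 ≠ 0 := by
      rcases hni with h | h
      · exact Or.inl (fun h0 => h ⟨⌊α⌋, by rw [hfr] at h0; linarith⟩)
      · exact Or.inr (fun h0 => h ⟨⌊β⌋, by rw [hfr'] at h0; linarith⟩)
    have hm1 : ∀ j k : ℤ, ∃ m : ℤ, u1 * (α - j) + v1 * (β - k) = (m : ℝ) := by
      intro j k
      refine ⟨E1 - j * (B1 - A1) - k * (C1 - A1), ?_⟩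
      rw [hu1, hv1]
      push_cast
      linear_combination heq1
    have hm2 : ∀ j k : ℤ, ∃ m : ℤ, u2 * (α - j) + v2 * (β - k) = (m : ℝ) := by
      intro j k
      refine ⟨E2 - j * (B2 - A2) - k * (C2 - A2), ?_⟩
      rw [hu2, hv2]
      push_cast
      linear_combination heq2
    have hm1' : ∀ j k : ℤ, ∃ m : ℤ, u1 * ((j:ℝ) - α) + v1 * ((k:ℝ) - β) = (m : ℝ) := by
      intro j k
      refine ⟨j * (B1 - A1) + k * (C1 - A1) - E1, ?_⟩
      rw [hu1, hv1]
      push_cast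
      linear_combination -heq1
    have hm2' : ∀ j k : ℤ, ∃ m : ℤ, u2 * ((j:ℝ) - α) + v2 * ((k:ℝ) - β) = (m : ℝ) := by
      intro j k
      refine ⟨j * (B2 - A2) + k * (C2 - A2) - E2, ?_⟩
      rw [hu2, hv2]
      push_cast
      linear_combination -heq2
    by_cases hsum : s0 + t0 ≤ 1
    · have hq : ((u1 * s0 + v1 * t0 + A1, u2 * s0 + v2 * t0 + A2) : ℝ × ℝ)
          ∈ convexHull ℝ ({a, b, c} : Set (ℝ × ℝ)) := by
        rw [mem_hull_iff']
        exact ⟨s0, t0, hs0n, ht0n, hsum, rfl⟩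
      have hql : ((u1 * s0 + v1 * t0 + A1, u2 * s0 + v2 * t0 + A2) : ℝ × ℝ) ∈ lat := by
        apply hlat
        · rw [hfr, hfr']; exact hm1 ⌊α⌋ ⌊β⌋
        · rw [hfr, hfr']; exact hm2 ⌊α⌋ ⌊β⌋
      have hmem : ((u1 * s0 + v1 * t0 + A1, u2 * s0 + v2 * t0 + A2) : ℝ × ℝ)
          ∈ ({a, b, c} : Set (ℝ × ℝ)) := by
        rw [← hEmpty]; exact ⟨hq, hql⟩
      simp only [Set.mem_insert_iff, Set.mem_singleton_iff] at hmem
      rcases hmem with h' | h' | h'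
      · rw [ha_def, Prod.mk.injEq] at h'
        have e1 : u1 * s0 + v1 * t0 = 0 := by linarith [h'.1]
        have e2 : u2 * s0 + v2 * t0 = 0 := by linarith [h'.2]
        have hs_eq : s0 * (u1 * v2 - v1 * u2) = 0 * (u1 * v2 - v1 * u2) := by
          linear_combination v2 * e1 - v1 * e2
        have ht_eq : t0 * (u1 * v2 - v1 * u2) = 0 * (u1 * v2 - v1 * u2) := by
          linear_combination u1 * e2 - u2 * e1
        rcases hne with h | h
        · exact h (mul_right_cancel₀ hDRne hs_eq)
        · exact h (mul_right_cancel₀ hDRne ht_eq)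
      · rw [hb_def, Prod.mk.injEq] at h'
        have e1 : u1 * s0 + v1 * t0 = u1 := by
          linarith [h'.1]
        have e2 : u2 * s0 + v2 * t0 = u2 := by
          linarith [h'.2]
        have hs_eq : s0 * (u1 * v2 - v1 * u2) = 1 * (u1 * v2 - v1 * u2) := by
          linear_combination v2 * e1 - v1 * e2
        have : s0 = 1 := mul_right_cancel₀ hDRne hs_eq
        linarith
      · rw [hc_def, Prod.mk.injEq] at h'
        have e1 : u1 * s0 + v1 * t0 = v1 := by
          linarith [h'.1]
        have e2 : u2 * s0 + v2 * t0 = v2 := by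
          linarith [h'.2]
        have ht_eq : t0 * (u1 * v2 - v1 * u2) = 1 * (u1 * v2 - v1 * u2) := by
          linear_combination u1 * e2 - u2 * e1
        have : t0 = 1 := mul_right_cancel₀ hDRne ht_eq
        linarith
    · push_neg at hsum
      have hq : ((u1 * (1 - s0) + v1 * (1 - t0) + A1, u2 * (1 - s0) + v2 * (1 - t0) + A2) : ℝ × ℝ)
          ∈ convexHull ℝ ({a, b, c} : Set (ℝ × ℝ)) := by
        rw [mem_hull_iff']
        exact ⟨1 - s0, 1 - t0, by linarith, by linarith, by linarith, rfl⟩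
      have hs1a : (1 : ℝ) - s0 = ((⌊α⌋ + 1 : ℤ) : ℝ) - α := by
        rw [hfr]; push_cast; ring
      have ht1a : (1 : ℝ) - t0 = ((⌊β⌋ + 1 : ℤ) : ℝ) - β := by
        rw [hfr']; push_cast; ring
      have hql : ((u1 * (1 - s0) + v1 * (1 - t0) + A1,
          u2 * (1 - s0) + v2 * (1 - t0) + A2) : ℝ × ℝ) ∈ lat := by
        apply hlat
        · rw [hs1a, ht1a]; exact hm1' (⌊α⌋ + 1) (⌊β⌋ + 1)
        · rw [hs1a, ht1a]; exact hm2' (⌊α⌋ + 1) (⌊β⌋ + 1)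
      have hmem : ((u1 * (1 - s0) + v1 * (1 - t0) + A1,
          u2 * (1 - s0) + v2 * (1 - t0) + A2) : ℝ × ℝ) ∈ ({a, b, c} : Set (ℝ × ℝ)) := by
        rw [← hEmpty]; exact ⟨hq, hql⟩
      simp only [Set.mem_insert_iff, Set.mem_singleton_iff] at hmem
      rcases hmem with h' | h' | h'
      · rw [ha_def, Prod.mk.injEq] at h'
        have e1 : u1 * (1 - s0) + v1 * (1 - t0) = 0 := by linarith [h'.1]
        have e2 : u2 * (1 - s0) + v2 * (1 - t0) = 0 := by linarith [h'.2]
        have hs_eq : (1 - s0) * (u1 * v2 - v1 * u2) = 0 * (u1 * v2 - v1 * u2) := by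
          linear_combination v2 * e1 - v1 * e2
        have : (1 : ℝ) - s0 = 0 := mul_right_cancel₀ hDRne hs_eq
        linarith
      · rw [hb_def, Prod.mk.injEq] at h'
        have e1 : u1 * (1 - s0) + v1 * (1 - t0) = u1 := by
          linarith [h'.1]
        have e2 : u2 * (1 - s0) + v2 * (1 - t0) = u2 := by
          linarith [h'.2]
        have ht_eq : (1 - t0) * (u1 * v2 - v1 * u2) = 0 * (u1 * v2 - v1 * u2) := by
          linear_combination u1 * e2 - u2 * e1
        have : (1 : ℝ) - t0 = 0 := mul_right_cancel₀ hDRne ht_eq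
        linarith
      · rw [hc_def, Prod.mk.injEq] at h'
        have e1 : u1 * (1 - s0) + v1 * (1 - t0) = v1 := by
          linarith [h'.1]
        have e2 : u2 * (1 - s0) + v2 * (1 - t0) = v2 := by
          linarith [h'.2]
        have hs_eq : (1 - s0) * (u1 * v2 - v1 * u2) = 0 * (u1 * v2 - v1 * u2) := by
          linear_combination v2 * e1 - v1 * e2
        have : (1 : ℝ) - s0 = 0 := mul_right_cancel₀ hDRne hs_eq
        linarith
  · -- det = ±1 → hull ∩ lat = vertices
    intro hD
    apply Set.Subset.antisymm
    · rintro p ⟨hp, P1, P2, rfl⟩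
      rw [mem_hull_iff'] at hp
      obtain ⟨s, t, hs, ht, hst, heq⟩ := hp
      have h1' : (P1:ℝ) = u1 * s + v1 * t + (A1:ℝ) := congrArg Prod.fst heq
      have h2' : (P2:ℝ) = u2 * s + v2 * t + (A2:ℝ) := congrArg Prod.snd heq
      have h1 : u1 * s + v1 * t = ((P1 - A1 : ℤ) : ℝ) := by push_cast; linarith
      have h2 : u2 * s + v2 * t = ((P2 - A2 : ℤ) : ℝ) := by push_cast; linarith
      obtain ⟨hs_eq, ht_eq⟩ := tri_cramer hDRne h1 h2
      -- s and t are integers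
      have hDcases : (Dz : ℝ) = 1 ∨ (Dz : ℝ) = -1 := by
        rcases hD with h' | h' <;> [left; right] <;> rw [h'] <;> norm_num
      have hSint : ∃ S : ℤ, s = (S : ℝ) := by
        rcases hDcases with h' | h'
        · refine ⟨(P1 - A1) * (C2 - A2) - (C1 - A1) * (P2 - A2), ?_⟩
          rw [hs_eq, ← hDR, h', div_one]; push_cast; ring
        · refine ⟨-((P1 - A1) * (C2 - A2) - (C1 - A1) * (P2 - A2)), ?_⟩
          rw [hs_eq, ← hDR, h']; push_cast; field_simp; rw [hv1, hv2]; ring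
      have hTint : ∃ T : ℤ, t = (T : ℝ) := by
        rcases hDcases with h' | h'
        · refine ⟨(B1 - A1) * (P2 - A2) - (P1 - A1) * (B2 - A2), ?_⟩
          rw [ht_eq, ← hDR, h', div_one]; push_cast; ring
        · refine ⟨-((B1 - A1) * (P2 - A2) - (P1 - A1) * (B2 - A2)), ?_⟩
          rw [ht_eq, ← hDR, h']; push_cast; field_simp; rw [hu1, hu2]; ring
      obtain ⟨S, rfl⟩ := hSint
      obtain ⟨T, rfl⟩ := hTint
      have hS0 : 0 ≤ S := by exact_mod_cast hs
      have hT0 : 0 ≤ T := by exact_mod_cast ht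
      have hST : S + T ≤ 1 := by exact_mod_cast hst
      have hcases : (S = 0 ∧ T = 0) ∨ (S = 1 ∧ T = 0) ∨ (S = 0 ∧ T = 1) := by omega
      rcases hcases with ⟨rfl, rfl⟩ | ⟨rfl, rfl⟩ | ⟨rfl, rfl⟩
      · left
        rw [ha_def, Prod.mk.injEq]
        constructor
        · rw [h1']; push_cast; ring
        · rw [h2']; push_cast; ring
      · right; left
        rw [hb_def, Prod.mk.injEq]
        constructor
        · rw [h1', hu1]; push_cast; ring
        · rw [h2', hu2]; push_cast; ring
      · right; right
        show ((P1:ℝ), (P2:ℝ)) = c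
        rw [hc_def, Prod.mk.injEq]
        constructor
        · rw [h1', hv1]; push_cast; ring
        · rw [h2', hv2]; push_cast; ring
    · intro p hp
      refine ⟨subset_convexHull ℝ _ hp, ?_⟩
      rcases hp with rfl | rfl | rfl
      · exact ⟨A1, A2, rfl⟩
      · exact ⟨B1, B2, rfl⟩
      · exact ⟨C1, C2, rfl⟩
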